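/- If NDRK(T̄) = ∞ (equivalently ≥ ω₁), then there is a perfect set P ⊆ 2^ω such that |(B+η) ∩ (B+ν)| ≥ k for all η, ν ∈ P, where B = ⋃_{n<ω} [T_n] is the union of the branch sets of the trees T_n. -/

import Mathlib

open scoped Classical

/-- Finite binary sequences, i.e. elements of `2^{<ω}`. -/
abbrev Seq2 : Type := List (ZMod 2)

/-- Coordinatewise addition mod 2 of finite binary sequences (of the same length). -/
def seqAdd (x y : Seq2) : Seq2 := List.zipWith (· + ·) x y

/-- `T ⊆ 2^{<ω}` is a tree with no maximal nodes. -/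
def IsTreeNoMax (T : Set Seq2) : Prop :=
  (∀ s ∈ T, ∀ t : Seq2, t <+: s → t ∈ T) ∧
  (∀ s ∈ T, ∃ t ∈ T, s <+: t ∧ s ≠ t)

/-- An element of `𝐌_{T̄,k}` (`k = 2ι`): a tuple `(ℓ, u, h̄, ḡ)` as in Definition 3.3.
The functions `h_i`, `g_i` are recorded as total functions that take the default values
`0` resp. `[]` off the domain `u^⟨2⟩`. -/
structure MTK (T : ℕ → Set Seq2) (ι : ℕ) where
  len : ℕ
  u : Finset Seq2
  h : Fin ι → Seq2 → Seq2 → ℕ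
  g : Fin ι → Seq2 → Seq2 → Seq2
  len_pos : 0 < len
  mem_len : ∀ η ∈ u, η.length = len
  two_le_card : 2 ≤ u.card
  g_mem : ∀ (i : Fin ι), ∀ η ∈ u, ∀ ν ∈ u, η ≠ ν →
    g i η ν ∈ T (h i η ν) ∧ (g i η ν).length = len
  add_eq : ∀ (i : Fin ι), ∀ η ∈ u, ∀ ν ∈ u, η ≠ ν →
    seqAdd η (g i η ν) = seqAdd ν (g i ν η)
  no_rep : ∀ η ∈ u, ∀ ν ∈ u, η ≠ ν →
    Function.Injective (fun p : Fin ι × Bool => if p.2 then g p.1 η ν else g p.1 ν η)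
  h_default : ∀ i η ν, ¬ (η ∈ u ∧ ν ∈ u ∧ η ≠ ν) → h i η ν = 0
  g_default : ∀ i η ν, ¬ (η ∈ u ∧ ν ∈ u ∧ η ≠ ν) → g i η ν = []

namespace MTK

variable {T : ℕ → Set Seq2} {ι : ℕ}

/-- `m ⊑ n` : `n` extends `m`. -/
def Ext (m n : MTK T ι) : Prop :=
  m.len ≤ n.len ∧
  m.u = n.u.image (fun η => η.take m.len) ∧
  ∀ η ∈ n.u, ∀ ν ∈ n.u, η ≠ ν → η.take m.len ≠ ν.take m.len →
    ∀ i : Fin ι,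
      m.h i (η.take m.len) (ν.take m.len) = n.h i η ν ∧
      m.g i (η.take m.len) (ν.take m.len) = (n.g i η ν).take m.len

/-- `NdrkGe m α` says `ndrk(m) ≥ α`. -/
def NdrkGe (m : MTK T ι) (α : Ordinal) : Prop :=
  ∀ β : Ordinal, β < α → ∀ ν ∈ m.u, ∃ n : MTK T ι,
    m.len < n.len ∧ m.Ext n ∧ NdrkGe n β ∧
    2 ≤ (n.u.filter (fun η => ν <+: η)).card
termination_by α

end MTK


/-- The Cantor space 2^ω with coordinatewise addition mod 2. -/
abbrev Cantor : Type := ℕ → ZMod 2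

/-- The translation B + x. -/
def transl (B : Set Cantor) (x : Cantor) : Set Cantor := (fun b => b + x) '' B

/-- The set [T] of infinite branches of a tree T ⊆ 2^{<ω}. -/
def branches (T : Set Seq2) : Set Cantor :=
  {x : Cantor | ∀ ℓ : ℕ, (List.ofFn fun i : Fin ℓ => x i) ∈ T}

namespace Stmt18

/-- Restriction of an element of Cantor space to a finite sequence. -/
def res (x : Cantor) (ℓ : ℕ) : Seq2 := List.ofFn fun i : Fin ℓ => x i

@[simp] lemma res_length (x : Cantor) (ℓ : ℕ) : (res x ℓ).length = ℓ := by
  simp [res]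

lemma res_getElem (x : Cantor) {ℓ t : ℕ} (h : t < (res x ℓ).length) :
    (res x ℓ)[t] = x t := by
  simp [res]

lemma res_take (x : Cantor) {ℓ L : ℕ} (h : ℓ ≤ L) :
    (res x L).take ℓ = res x ℓ := by
  apply List.ext_getElem (by simp [h])
  intro t h1 h2
  rw [List.getElem_take, res_getElem, res_getElem]

lemma res_getD (x : Cantor) {ℓ t : ℕ} (h : t < ℓ) :
    (res x ℓ).getD t 0 = x t := by
  rw [List.getD_eq_getElem _ _ (by simpa using h), res_getElem]

lemma res_ne {x y : Cantor} {ℓ t : ℕ} (ht : t < ℓ) (hxy : x t ≠ y t) :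
    res x ℓ ≠ res y ℓ := by
  intro h
  apply hxy
  rw [← res_getD x ht, h, res_getD y ht]

/-- The limit of a coherent sequence of finite sequences. -/
lemma res_limit (L : ℕ → ℕ) (f : ℕ → Seq2)
    (hlen : ∀ k, (f k).length = L k)
    (hcoh : ∀ k k', k ≤ k' → f k = (f k').take (L k))
    (hgrow : ∀ t, t < L (t + 1)) :
    ∀ k, res (fun t => (f (t + 1)).getD t 0) (L k) = f k := by
  intro k
  apply List.ext_getElem (by simp [hlen])
  intro t h1 h2
  rw [res_getElem]
  rcases le_total (t + 1) k with hk | hk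
  · have hc := hcoh (t + 1) k hk
    have ht' : t < (f (t+1)).length := by rw [hlen]; exact hgrow t
    rw [List.getD_eq_getElem _ _ ht']
    have : (f (t+1))[t]'ht' = (f k)[t]'h2 := by
      simp only [hc]
      rw [List.getElem_take]
    exact this
  · have hc := hcoh k (t + 1) hk
    have ht : t < L k := by simpa using h1
    have ht' : t < (f (t+1)).length := by rw [hlen]; exact hgrow t
    rw [List.getD_eq_getElem _ _ ht']
    have : (f k)[t]'h2 = (f (t+1))[t]'ht' := by
      simp only [hc]
      rw [List.getElem_take]
    exact this.symm

lemma seqAdd_getD {l1 l2 : Seq2} {t : ℕ} (h1 : t < l1.length) (h2 : t < l2.length) :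
    (seqAdd l1 l2).getD t 0 = l1.getD t 0 + l2.getD t 0 := by
  have hl : t < (seqAdd l1 l2).length := by
    simp only [seqAdd, List.length_zipWith]
    omega
  rw [List.getD_eq_getElem _ _ hl, List.getD_eq_getElem _ _ h1, List.getD_eq_getElem _ _ h2]
  exact List.getElem_zipWith

end Stmt18
namespace Stmt18
namespace M
open MTK
variable {T : ℕ → Set Seq2} {ι : ℕ}

lemma ndrkGe_iff (m : MTK T ι) (α : Ordinal) :
    m.NdrkGe α ↔ ∀ β : Ordinal, β < α → ∀ ν ∈ m.u, ∃ n : MTK T ι,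
      m.len < n.len ∧ m.Ext n ∧ n.NdrkGe β ∧
      2 ≤ (n.u.filter (fun η => ν <+: η)).card := by
  rw [MTK.NdrkGe]

lemma ndrkGe_mono {m : MTK T ι} {α β : Ordinal} (h : m.NdrkGe α) (hle : β ≤ α) :
    m.NdrkGe β := by
  rw [ndrkGe_iff] at h ⊢
  exact fun γ hγ => h γ (hγ.trans_le hle)

lemma ext_refl (m : MTK T ι) : m.Ext m := by
  have htk : ∀ η ∈ m.u, η.take m.len = η := by
    intro η hη
    rw [← m.mem_len η hη, List.take_length]
  refine ⟨le_refl _, ?_, ?_⟩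
  · rw [Finset.image_congr (g := id) (fun η hη => htk η hη), Finset.image_id]
  · intro η hη ν hν hne _ i
    rw [htk η hη, htk ν hν]
    refine ⟨rfl, ?_⟩
    rw [← (m.g_mem i η hη ν hν hne).2, List.take_length]

lemma ext_trans {m n p : MTK T ι} (h1 : m.Ext n) (h2 : n.Ext p) : m.Ext p := by
  obtain ⟨hl1, hu1, hg1⟩ := h1
  obtain ⟨hl2, hu2, hg2⟩ := h2
  have htt : ∀ τ : Seq2, (τ.take n.len).take m.len = τ.take m.len := by
    intro τ; rw [List.take_take, min_eq_left hl1]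
  refine ⟨hl1.trans hl2, ?_, ?_⟩
  · rw [hu1, hu2, Finset.image_image]
    apply Finset.image_congr
    intro τ _
    exact htt τ
  · intro η hη ν hν hne htk i
    have hη' : η.take n.len ∈ n.u := by
      rw [hu2]; exact Finset.mem_image_of_mem _ hη
    have hν' : ν.take n.len ∈ n.u := by
      rw [hu2]; exact Finset.mem_image_of_mem _ hν
    have htk2 : (η.take n.len).take m.len ≠ (ν.take n.len).take m.len := by
      rw [htt, htt]; exact htk
    have hne' : η.take n.len ≠ ν.take n.len := by
      intro h; apply htk2; rw [h]
    have e2 := hg2 η hη ν hν hne hne' i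
    have e1 := hg1 (η.take n.len) hη' (ν.take n.len) hν' hne' htk2 i
    constructor
    · rw [← e2.1, ← e1.1, htt, htt]
    · rw [← htt η, ← htt ν, e1.2, e2.2, List.take_take, min_eq_left hl1]

/-- Pigeonhole: from unbounded rank get an extension of unbounded rank with splitting. -/
lemma exists_step (m : MTK T ι) (hm : ∀ α : Ordinal.{0}, m.NdrkGe α)
    {ν : Seq2} (hν : ν ∈ m.u) :
    ∃ n : MTK T ι, (∀ α : Ordinal.{0}, n.NdrkGe α) ∧ m.len < n.len ∧ m.Ext n ∧
      2 ≤ (n.u.filter (fun η => ν <+: η)).card := by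
  have H : ∀ β : Ordinal.{0}, ∃ n : MTK T ι,
      m.len < n.len ∧ m.Ext n ∧ n.NdrkGe β ∧
      2 ≤ (n.u.filter (fun η => ν <+: η)).card := by
    intro β
    exact (ndrkGe_iff m (Order.succ β)).1 (hm _) β (Order.lt_succ β) ν hν
  choose S h1 h2 h3 h4 using H
  by_contra hcon
  push_neg at hcon
  -- for each n failing, pick a witness ordinal
  have hbad : ∀ β : Ordinal.{0}, ∃ α, ¬ (S β).NdrkGe α := by
    intro β
    by_contra hall
    push_neg at hall
    exact absurd (h4 β) (not_le_of_gt (hcon (S β) hall (h1 β) (h2 β)))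
  classical
  let bound : MTK T ι → Ordinal.{0} := fun n =>
    if h : ∃ α, ¬ n.NdrkGe α then Classical.choose h else 0
  set γ : Ordinal.{0} := iSup bound with hγ
  have hb := hbad γ
  have hble : bound (S γ) ≤ γ := le_ciSup (Ordinal.bddAbove_range bound) (S γ)
  have hge : (S γ).NdrkGe (bound (S γ)) := ndrkGe_mono (h3 γ) hble
  have : ¬ (S γ).NdrkGe (bound (S γ)) := by
    have : bound (S γ) = Classical.choose hb := by
      simp only [bound, dif_pos hb]
    rw [this]
    exact Classical.choose_spec hb
  exact this hge

/-- Splitting at all nodes simultaneously. -/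
lemma exists_split (m : MTK T ι) (hm : ∀ α : Ordinal.{0}, m.NdrkGe α) :
    ∃ n : MTK T ι, (∀ α : Ordinal.{0}, n.NdrkGe α) ∧ m.len < n.len ∧ m.Ext n ∧
      ∀ ν ∈ m.u, 2 ≤ (n.u.filter (fun η => ν <+: η)).card := by
  suffices H : ∀ s : Finset Seq2, s ⊆ m.u →
      ∃ n : MTK T ι, (∀ α : Ordinal.{0}, n.NdrkGe α) ∧ m.len < n.len ∧ m.Ext n ∧
        ∀ ν ∈ s, 2 ≤ (n.u.filter (fun η => ν <+: η)).card by
    obtain ⟨n, h⟩ := H m.u (le_refl _)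
    exact ⟨n, h⟩
  intro s
  induction s using Finset.induction with
  | empty =>
    intro _
    obtain ⟨ν, hν⟩ := Finset.card_pos.1 (lt_of_lt_of_le two_pos m.two_le_card)
    obtain ⟨n, hn1, hn2, hn3, _⟩ := exists_step m hm hν
    exact ⟨n, hn1, hn2, hn3, fun ν h => absurd h (Finset.notMem_empty ν)⟩
  | @insert a s' ha ih =>
    intro hsub
    obtain ⟨n, hn1, hn2, hn3, hn4⟩ := ih (fun x hx => hsub (Finset.mem_insert_of_mem hx))
    have hau : a ∈ m.u := hsub (Finset.mem_insert_self a s')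
    have : a ∈ n.u.image (fun η => η.take m.len) := by rw [← hn3.2.1]; exact hau
    obtain ⟨ρ, hρ, hρa⟩ := Finset.mem_image.1 this
    obtain ⟨p, hp1, hp2, hp3, hp4⟩ := exists_step n hn1 hρ
    refine ⟨p, hp1, hn2.trans hp2, ext_trans hn3 hp3, ?_⟩
    intro ν hν
    rcases Finset.mem_insert.1 hν with rfl | hν'
    · -- ν = a : use splitting at ρ, a <+: ρ
      have hpre : ν <+: ρ := hρa ▸ List.take_prefix _ _
      calc (2 : ℕ) ≤ (p.u.filter (fun η => ρ <+: η)).card := hp4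
        _ ≤ (p.u.filter (fun η => ν <+: η)).card := by
            apply Finset.card_le_card
            apply Finset.monotone_filter_right
            intro η _ hη
            exact hpre.trans hη
    · -- ν ∈ s' : lift via surjection take n.len : p.u → n.u
      have h2n := hn4 ν hν'
      refine le_trans h2n (Finset.card_le_card_of_surjOn (fun τ => τ.take n.len) ?_)
      intro σ hσ
      simp only [Finset.coe_filter, Set.mem_setOf_eq] at hσ
      obtain ⟨hσu, hσpre⟩ := hσ
      have : σ ∈ p.u.image (fun η => η.take n.len) := by rw [← hp3.2.1]; exact hσu
      obtain ⟨τ, hτ, hτσ⟩ := Finset.mem_image.1 this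
      refine ⟨τ, ?_, hτσ⟩
      simp only [Finset.coe_filter, Set.mem_setOf_eq]
      exact ⟨hτ, hσpre.trans (hτσ ▸ List.take_prefix _ _)⟩

end M
end Stmt18
namespace Stmt18
namespace M
variable {T : ℕ → Set Seq2} {ι : ℕ}

/-- Full-rank conditions. -/
abbrev FullM (T : ℕ → Set Seq2) (ι : ℕ) := {m : MTK T ι // ∀ α : Ordinal.{0}, m.NdrkGe α}

noncomputable def next (m : FullM T ι) : FullM T ι :=
  ⟨Classical.choose (exists_split m.1 m.2), (Classical.choose_spec (exists_split m.1 m.2)).1⟩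

lemma next_spec (m : FullM T ι) :
    m.1.len < (next m).1.len ∧ m.1.Ext (next m).1 ∧
      ∀ ν ∈ m.1.u, 2 ≤ ((next m).1.u.filter (fun η => ν <+: η)).card :=
  (Classical.choose_spec (exists_split m.1 m.2)).2

noncomputable def chain (m0 : FullM T ι) : ℕ → FullM T ι
  | 0 => m0
  | j + 1 => next (chain m0 j)

variable (m0 : FullM T ι)

/-- `ℓ_j`. -/
noncomputable abbrev clen (j : ℕ) : ℕ := (chain m0 j).1.len
/-- `u_j`. -/
noncomputable abbrev cu (j : ℕ) : Finset Seq2 := (chain m0 j).1.u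

lemma clen_lt_succ (j : ℕ) : clen m0 j < clen m0 (j + 1) :=
  (next_spec (chain m0 j)).1

lemma chain_ext_succ (j : ℕ) : (chain m0 j).1.Ext (chain m0 (j + 1)).1 :=
  (next_spec (chain m0 j)).2.1

lemma chain_split (j : ℕ) : ∀ ν ∈ cu m0 j,
    2 ≤ ((cu m0 (j + 1)).filter (fun η => ν <+: η)).card :=
  (next_spec (chain m0 j)).2.2

lemma chain_ext : ∀ {j j' : ℕ}, j ≤ j' → (chain m0 j).1.Ext (chain m0 j').1 := by
  intro j j' h
  induction j' with
  | zero => rw [Nat.le_zero.1 h]; exact ext_refl _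
  | succ j' ih =>
    rcases Nat.lt_or_ge j (j' + 1) with h' | h'
    · exact ext_trans (ih (Nat.lt_succ_iff.1 h')) (chain_ext_succ m0 j')
    · rw [le_antisymm h h']; exact ext_refl _

lemma clen_mono {j j' : ℕ} (h : j ≤ j') : clen m0 j ≤ clen m0 j' :=
  (chain_ext m0 h).1

lemma clen_ge (j : ℕ) : j + 1 ≤ clen m0 j := by
  induction j with
  | zero => exact (chain m0 0).1.len_pos
  | succ j ih => exact Nat.lt_of_le_of_lt ih (clen_lt_succ m0 j)

lemma cu_eq_image {j j' : ℕ} (h : j ≤ j') :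
    cu m0 j = (cu m0 j').image (fun η => η.take (clen m0 j)) :=
  (chain_ext m0 h).2.1

lemma mem_cu_length {j : ℕ} {η : Seq2} (h : η ∈ cu m0 j) : η.length = clen m0 j :=
  (chain m0 j).1.mem_len η h

/-- Extension of a node one level up. -/
lemma exists_lift {j : ℕ} {η : Seq2} (h : η ∈ cu m0 j) :
    ∃ ρ ∈ cu m0 (j + 1), ρ.take (clen m0 j) = η := by
  have := cu_eq_image m0 (Nat.le_succ j) ▸ h
  obtain ⟨ρ, hρ, hρη⟩ := Finset.mem_image.1 this
  exact ⟨ρ, hρ, hρη⟩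

/-- The perfect set `P`. -/
def PP : Set Cantor := {x : Cantor | ∀ j : ℕ, res x (clen m0 j) ∈ cu m0 j}

/-- Every node of the fusion tree extends to a branch in `P`. -/
lemma exists_branch (j0 : ℕ) {ν : Seq2} (hν : ν ∈ cu m0 j0) :
    ∃ x ∈ PP m0, res x (clen m0 j0) = ν := by
  classical
  -- choose successive extensions
  have hpick : ∀ j : ℕ, ∀ σ : Seq2, ∃ ρ : Seq2, σ ∈ cu m0 j →
      ρ ∈ cu m0 (j + 1) ∧ ρ.take (clen m0 j) = σ := by
    intro j σ
    by_cases h : σ ∈ cu m0 j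
    · obtain ⟨ρ, h1, h2⟩ := exists_lift m0 h
      exact ⟨ρ, fun _ => ⟨h1, h2⟩⟩
    · exact ⟨[], fun hh => absurd hh h⟩
  choose pick hpick using hpick
  -- the sequence of nodes above ν
  let f : ℕ → Seq2 := fun k => Nat.rec ν (fun k' prev => pick (j0 + k') prev) k
  have hfsucc : ∀ k, f (k + 1) = pick (j0 + k) (f k) := fun k => rfl
  have hf : ∀ k, f k ∈ cu m0 (j0 + k) ∧ (f (k + 1)).take (clen m0 (j0 + k)) = f k := by
    intro k
    induction k with
    | zero =>
      refine ⟨hν, ?_⟩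
      rw [hfsucc 0]
      exact (hpick (j0 + 0) (f 0) hν).2
    | succ k ih =>
      have h1 : f (k + 1) ∈ cu m0 (j0 + (k + 1)) := by
        rw [hfsucc k]
        exact (hpick (j0 + k) (f k) ih.1).1
      refine ⟨h1, ?_⟩
      rw [hfsucc (k + 1)]
      exact (hpick (j0 + (k + 1)) (f (k + 1)) h1).2
  -- coherence
  have hcoh : ∀ k k', k ≤ k' → f k = (f k').take (clen m0 (j0 + k)) := by
    intro k k' h
    induction k' with
    | zero =>
      rw [Nat.le_zero.1 h]
      rw [← mem_cu_length m0 (hf 0).1, List.take_length]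
    | succ k' ih =>
      rcases Nat.lt_or_ge k (k' + 1) with h' | h'
      · have hk : k ≤ k' := Nat.lt_succ_iff.1 h'
        rw [ih hk, ← (hf k').2, List.take_take,
          min_eq_left (clen_mono m0 (by omega : j0 + k ≤ j0 + k'))]
      · have : k = k' + 1 := le_antisymm h h'
        subst this
        rw [← mem_cu_length m0 (hf (k'+1)).1, List.take_length]
  have hlen : ∀ k, (f k).length = clen m0 (j0 + k) := fun k => mem_cu_length m0 (hf k).1
  have hgrow : ∀ t, t < clen m0 (j0 + (t + 1)) := by
    intro t
    have := clen_ge m0 (j0 + (t + 1))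
    omega
  set x : Cantor := fun t => (f (t + 1)).getD t 0 with hx
  have hres : ∀ k, res x (clen m0 (j0 + k)) = f k :=
    res_limit (fun k => clen m0 (j0 + k)) f hlen hcoh hgrow
  have hres0 : res x (clen m0 j0) = ν := by
    have := hres 0
    exact this
  refine ⟨x, ?_, hres0⟩
  intro j
  rcases Nat.le_total j0 j with h | h
  · have : res x (clen m0 (j0 + (j - j0))) = f (j - j0) := hres (j - j0)
    rw [show j0 + (j - j0) = j by omega] at this
    rw [this]
    have := (hf (j - j0)).1
    rwa [show j0 + (j - j0) = j by omega] at this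
  · rw [cu_eq_image m0 h]
    rw [← res_take x (clen_mono m0 h), hres0]
    exact Finset.mem_image_of_mem _ hν

lemma PP_nonempty : (PP m0).Nonempty := by
  obtain ⟨ν, hν⟩ := Finset.card_pos.1 (lt_of_lt_of_le two_pos (chain m0 0).1.two_le_card)
  obtain ⟨x, hx, _⟩ := exists_branch m0 0 hν
  exact ⟨x, hx⟩

end M
end Stmt18
namespace Stmt18
namespace M
variable {T : ℕ → Set Seq2} {ι : ℕ} (m0 : FullM T ι)

lemma isClosed_res_set (ℓ : ℕ) (u : Finset Seq2) :
    IsClosed {x : Cantor | res x ℓ ∈ u} := by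
  have : {x : Cantor | res x ℓ ∈ u} =
      (fun x : Cantor => (fun i : Fin ℓ => x i)) ⁻¹'
        {v : Fin ℓ → ZMod 2 | List.ofFn v ∈ u} := rfl
  rw [this]
  have hc : Continuous (fun (x : Cantor) => (fun i : Fin ℓ => x (i : ℕ))) :=
    continuous_pi fun i : Fin ℓ => continuous_apply (i : ℕ)
  exact IsClosed.preimage hc (isClosed_discrete _)

lemma PP_closed : IsClosed (PP m0) := by
  have : PP m0 = ⋂ j : ℕ, {x : Cantor | res x (clen m0 j) ∈ cu m0 j} := by
    ext x; simp [PP, Set.mem_iInter]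
  rw [this]
  exact isClosed_iInter fun j => isClosed_res_set _ _

/-- Cylinder neighborhoods form a basis. -/
lemma exists_cyl_subset {x : Cantor} {U : Set Cantor} (hU : U ∈ nhds x) :
    ∃ N : ℕ, {y : Cantor | ∀ t < N, y t = x t} ⊆ U := by
  have hpi := @nhds_pi ℕ (fun _ => ZMod 2) _ x
  rw [hpi, Filter.mem_pi] at hU
  obtain ⟨I, hIfin, V, hV, hIV⟩ := hU
  obtain ⟨N, hN⟩ := hIfin.bddAbove
  refine ⟨N + 1, fun y hy => hIV ?_⟩
  intro i hi
  have : y i = x i := hy i (Nat.lt_succ_of_le (hN hi))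
  rw [this]
  exact mem_of_mem_nhds (hV i)

lemma PP_perfect : Perfect (PP m0) := by
  refine ⟨PP_closed m0, ?_⟩
  intro x hx
  rw [accPt_iff_nhds]
  intro U hU
  obtain ⟨N, hN⟩ := exists_cyl_subset hU
  -- pick a level j with clen ≥ N
  set j : ℕ := N with hj
  have hlj : N ≤ clen m0 j := le_trans (Nat.le_succ N) (clen_ge m0 N)
  have hxj : res x (clen m0 j) ∈ cu m0 j := hx j
  have hsplit := chain_split m0 j _ hxj
  obtain ⟨σ₁, hσ₁, σ₂, hσ₂, hσne⟩ := Finset.one_lt_card.1 hsplit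
  simp only [Finset.mem_filter] at hσ₁ hσ₂
  -- one of σ₁, σ₂ differs from res x (clen m0 (j+1))
  obtain ⟨σ, hσu, hσpre, hσx⟩ :
      ∃ σ, σ ∈ cu m0 (j+1) ∧ res x (clen m0 j) <+: σ ∧ σ ≠ res x (clen m0 (j+1)) := by
    by_cases h : σ₁ = res x (clen m0 (j+1))
    · exact ⟨σ₂, hσ₂.1, hσ₂.2, fun hh => hσne (hh ▸ h ▸ rfl)⟩
    · exact ⟨σ₁, hσ₁.1, hσ₁.2, h⟩
  obtain ⟨y, hy, hyres⟩ := exists_branch m0 (j+1) hσu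
  refine ⟨y, ⟨hN ?_, hy⟩, ?_⟩
  · -- y agrees with x below N
    intro t ht
    have h1 : res y (clen m0 j) = res x (clen m0 j) := by
      rw [← res_take y (clen_mono m0 (Nat.le_succ j)), hyres]
      have := List.prefix_iff_eq_take.1 hσpre
      rw [res_length] at this
      exact this.symm
    have ht' : t < clen m0 j := lt_of_lt_of_le ht hlj
    rw [← res_getD y ht', h1, res_getD x ht']
  · intro hyx
    apply hσx
    rw [← hyres, hyx]

end M
end Stmt18
namespace Stmt18
namespace M
variable {T : ℕ → Set Seq2} {ι : ℕ} (m0 : FullM T ι)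

lemma key (hT : ∀ n, IsTreeNoMax (T n)) (B : Set Cantor) (hB : B = ⋃ n, branches (T n))
    {η ν : Cantor} (hη : η ∈ PP m0) (hν : ν ∈ PP m0) (hne : η ≠ ν) :
    ((2 * ι : ℕ) : Cardinal) ≤ Cardinal.mk ↑(transl B η ∩ transl B ν) := by
  obtain ⟨t0, ht0⟩ := Function.ne_iff.1 hne
  set s : ℕ → ℕ := fun k => (t0 + 1) + k with hs
  have hsmono : ∀ {k k' : ℕ}, k ≤ k' → s k ≤ s k' := fun {k k'} h => by simp only [hs]; omega
  set A : Bool → Cantor := fun b => cond b η ν with hA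
  have hAP : ∀ b, A b ∈ PP m0 := by intro b; cases b <;> assumption
  have ht0lt : ∀ k, t0 < clen m0 (s k) := by
    intro k; have := clen_ge m0 (s k); simp only [hs] at this ⊢; omega
  have hAne : ∀ b k, res (A b) (clen m0 (s k)) ≠ res (A (!b)) (clen m0 (s k)) := by
    intro b k
    cases b
    · exact res_ne (ht0lt k) (Ne.symm ht0)
    · exact res_ne (ht0lt k) ht0
  have hAmem : ∀ b k, res (A b) (clen m0 (s k)) ∈ cu m0 (s k) := fun b k => hAP b (s k)
  -- the approximations
  set gs : Fin ι → Bool → ℕ → Seq2 := fun i b k =>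
    (chain m0 (s k)).1.g i (res (A b) (clen m0 (s k))) (res (A (!b)) (clen m0 (s k))) with hgs
  have hglen : ∀ i b k, (gs i b k).length = clen m0 (s k) := fun i b k =>
    ((chain m0 (s k)).1.g_mem i _ (hAmem b k) _ (hAmem (!b) k) (hAne b k)).2
  have hgmem : ∀ i b k, gs i b k ∈
      T ((chain m0 (s k)).1.h i (res (A b) (clen m0 (s k))) (res (A (!b)) (clen m0 (s k)))) :=
    fun i b k => ((chain m0 (s k)).1.g_mem i _ (hAmem b k) _ (hAmem (!b) k) (hAne b k)).1
  -- coherence and h-constancy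
  have hext : ∀ (i : Fin ι) (b : Bool) (k k' : ℕ), k ≤ k' →
      (chain m0 (s k)).1.h i (res (A b) (clen m0 (s k))) (res (A (!b)) (clen m0 (s k)))
        = (chain m0 (s k')).1.h i (res (A b) (clen m0 (s k'))) (res (A (!b)) (clen m0 (s k')))
      ∧ gs i b k = (gs i b k').take (clen m0 (s k)) := by
    intro i b k k' hk
    have hE := chain_ext m0 (hsmono hk)
    have h1 : (res (A b) (clen m0 (s k'))).take (clen m0 (s k)) = res (A b) (clen m0 (s k)) :=
      res_take _ (clen_mono m0 (hsmono hk))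
    have h2 : (res (A (!b)) (clen m0 (s k'))).take (clen m0 (s k)) = res (A (!b)) (clen m0 (s k)) :=
      res_take _ (clen_mono m0 (hsmono hk))
    have h3 := hE.2.2 _ (hAmem b k') _ (hAmem (!b) k') (hAne b k')
      (by rw [h1, h2]; exact hAne b k) i
    rw [h1, h2] at h3
    exact ⟨h3.1, h3.2⟩
  -- limits
  set G : Fin ι → Bool → Cantor := fun i b t => (gs i b (t + 1)).getD t 0 with hG
  have hgrow : ∀ t, t < clen m0 (s (t + 1)) := by
    intro t; have := clen_ge m0 (s (t + 1)); simp only [hs] at this ⊢; omega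
  have hres : ∀ (i : Fin ι) (b : Bool) (k : ℕ), res (G i b) (clen m0 (s k)) = gs i b k := by
    intro i b
    exact res_limit (fun k => clen m0 (s k)) (gs i b) (hglen i b)
      (fun k k' h => (hext i b k k' h).2) hgrow
  -- membership in B
  have hGB : ∀ (i : Fin ι) (b : Bool), G i b ∈ B := by
    intro i b
    rw [hB]
    apply Set.mem_iUnion.2
    refine ⟨(chain m0 (s 0)).1.h i (res (A b) (clen m0 (s 0))) (res (A (!b)) (clen m0 (s 0))), ?_⟩
    intro ℓ
    have hk : ℓ ≤ clen m0 (s ℓ) := by have := clen_ge m0 (s ℓ); simp only [hs] at this ⊢; omega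
    have heq : (List.ofFn fun t : Fin ℓ => G i b t) = (res (G i b) (clen m0 (s ℓ))).take ℓ := by
      rw [res_take _ hk]; rfl
    show (List.ofFn fun t : Fin ℓ => G i b t) ∈ _
    rw [heq, hres]
    have hmem := hgmem i b ℓ
    rw [← (hext i b 0 ℓ (Nat.zero_le ℓ)).1] at hmem
    exact (hT _).1 _ hmem _ (List.take_prefix _ _)
  -- pointwise addition identity
  have hadd : ∀ (i : Fin ι) (b : Bool) (t : ℕ),
      A b t + G i b t = A (!b) t + G i (!b) t := by
    intro i b t
    have hlt : t < clen m0 (s (t + 1)) := hgrow t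
    have haeq := (chain m0 (s (t + 1))).1.add_eq i _ (hAmem b (t + 1)) _ (hAmem (!b) (t + 1))
      (hAne b (t + 1))
    have e := congrArg (fun l : Seq2 => l.getD t 0) haeq
    rw [seqAdd_getD (by simpa using hlt) (by rw [hglen i b (t+1)]; exact hlt),
        seqAdd_getD (by simpa using hlt) ?hlen2] at e
    case hlen2 =>
      have := hglen i (!b) (t + 1)
      rw [hgs] at this
      simp only [Bool.not_not] at this ⊢
      rw [this]; exact hlt
    rw [res_getD _ hlt, res_getD _ hlt] at e
    have hGb : G i b t = (gs i b (t+1)).getD t 0 := rfl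
    have hGnb : G i (!b) t = (gs i (!b) (t+1)).getD t 0 := rfl
    rw [hGb, hGnb]
    convert e using 3
    simp only [hgs, Bool.not_not]
  -- the 2ι elements
  set E : Fin ι × Bool → Cantor := fun p => G p.1 p.2 + η with hE
  have hEη : ∀ p : Fin ι × Bool, E p ∈ transl B η := fun p => ⟨G p.1 p.2, hGB p.1 p.2, rfl⟩
  have hEν : ∀ p : Fin ι × Bool, E p ∈ transl B ν := by
    rintro ⟨i, b⟩
    refine ⟨G i (!b), hGB i (!b), ?_⟩
    funext t
    show G i (!b) t + ν t = G i b t + η t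
    have e := hadd i b t
    cases b
    · -- A false = ν, A true = η : e : ν t + G f t = η t + G t t
      simp only [A, cond] at e
      have hz : ∀ a b c d : ZMod 2, a + b = c + d → d + a = b + c := by decide
      exact hz _ _ _ _ e
    · -- e : η t + G t t = ν t + G f t
      simp only [A, cond] at e
      have hz : ∀ a b c d : ZMod 2, a + b = c + d → d + c = b + a := by decide
      exact hz _ _ _ _ e
  have hEinj : Function.Injective E := by
    intro p q hpq
    have hGpq : G p.1 p.2 = G q.1 q.2 := by
      funext t
      have h2 : G p.1 p.2 t + η t = G q.1 q.2 t + η t := congrFun hpq t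
      exact add_right_cancel h2
    have h0 : gs p.1 p.2 0 = gs q.1 q.2 0 := by
      rw [← hres p.1 p.2 0, ← hres q.1 q.2 0, hGpq]
    have hnr := (chain m0 (s 0)).1.no_rep _ (hη (s 0)) _ (hν (s 0)) (res_ne (ht0lt 0) ht0)
    apply hnr
    have hfix : ∀ r : Fin ι × Bool,
        (fun p : Fin ι × Bool => if p.2 then
            (chain m0 (s 0)).1.g p.1 (res η (clen m0 (s 0))) (res ν (clen m0 (s 0)))
          else
            (chain m0 (s 0)).1.g p.1 (res ν (clen m0 (s 0))) (res η (clen m0 (s 0)))) r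
          = gs r.1 r.2 0 := by
      rintro ⟨i, b⟩
      cases b <;> rfl
    show (fun p : Fin ι × Bool => if p.2 then _ else _) p = (fun p : Fin ι × Bool => if p.2 then _ else _) q
    rw [hfix p, hfix q]
    exact h0
  -- conclude
  have hsub : ∀ p : Fin ι × Bool, E p ∈ transl B η ∩ transl B ν := fun p => ⟨hEη p, hEν p⟩
  have hFinj : Function.Injective
      (fun p : Fin ι × Bool => (⟨E p, hsub p⟩ : ↑(transl B η ∩ transl B ν))) :=
    fun p q h => hEinj (congrArg Subtype.val h)
  calc ((2 * ι : ℕ) : Cardinal) = Cardinal.mk (Fin ι × Bool) := by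
        simp [Cardinal.mk_fintype, Nat.mul_comm]
    _ ≤ _ := Cardinal.mk_le_of_injective hFinj

end M
end Stmt18
theorem stmt_18 (T : ℕ → Set Seq2) (ι : ℕ) (hι : 2 ≤ ι)
    (hT : ∀ n, IsTreeNoMax (T n))
    (hinf : ∃ m : MTK T ι, ∀ α : Ordinal.{0}, MTK.NdrkGe m α)
    (B : Set Cantor) (hB : B = ⋃ n, branches (T n)) :
    ∃ P : Set Cantor, Perfect P ∧ P.Nonempty ∧
      ∀ η ∈ P, ∀ ν ∈ P,
        ((2 * ι : ℕ) : Cardinal) ≤ Cardinal.mk ↑(transl B η ∩ transl B ν) := by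
  classical
  obtain ⟨m, hm⟩ := hinf
  have m0 : Stmt18.M.FullM T ι := ⟨m, hm⟩
  refine ⟨Stmt18.M.PP m0, Stmt18.M.PP_perfect m0, Stmt18.M.PP_nonempty m0, ?_⟩
  intro η hη ν hν
  by_cases hne : η = ν
  · subst hne
    obtain ⟨a, ha, b, hb, hab⟩ :=
      Finset.one_lt_card.1 (lt_of_lt_of_le one_lt_two (Stmt18.M.chain m0 0).1.two_le_card)
    obtain ⟨xa, hxa, hra⟩ := Stmt18.M.exists_branch m0 0 ha
    obtain ⟨xb, hxb, hrb⟩ := Stmt18.M.exists_branch m0 0 hb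
    have hxab : xa ≠ xb := fun h => hab (by rw [← hra, ← hrb, h])
    obtain ⟨ν', hν', hνη⟩ : ∃ ν' ∈ Stmt18.M.PP m0, ν' ≠ η := by
      by_cases h : xa = η
      · exact ⟨xb, hxb, fun hh => hxab (by rw [h, hh])⟩
      · exact ⟨xa, hxa, h⟩
    have hkey := Stmt18.M.key m0 hT B hB hη hν' (Ne.symm hνη)
    refine le_trans hkey (Cardinal.mk_le_mk_of_subset ?_)
    rw [Set.inter_self]
    exact Set.inter_subset_left
  · exact Stmt18.M.key m0 hT B hB hη hν hne
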